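/- Let k ≥ 1 and suppose 0 ≤ α - c_k ≤ α - c_{k-1} ≤ ⋯ ≤ α - c₁ with α - c_{k+1} ≤ α - c_k. If α - c_k ≤ (1/k)·(1 + 1/(k - 1/(2(k+1))))·Σ_{i=1}^{k-1}(α - c_i), then α - c_{k+1} ≤ (1/(k+1))·(1 + 1/(k+1 - 1/(2(k+2))))·Σ_{i=1}^{k}(α - c_i). -/
import Mathlib

lemma aux10 (K S x y : ℝ) (hK : 1 ≤ K) (hS : 0 ≤ S) (hx : 0 ≤ x) (hyx : y ≤ x)
    (h : x ≤ (1 / K) * (1 + 1 / (K - 1 / (2 * (K + 1)))) * S) :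
    y ≤ (1 / (K + 1)) * (1 + 1 / ((K + 1) - 1 / (2 * (K + 2)))) * (S + x) := by
  have hK0 : 0 < K := by linarith
  have h1 : 0 < K + 1 := by linarith
  have h2 : 0 < K + 2 := by linarith
  have hupos : 0 < 1 / (2 * (K + 1)) := by positivity
  have hvpos : 0 < 1 / (2 * (K + 2)) := by positivity
  have hu : 1 / (2 * (K + 1)) * (2 * (K + 1)) = 1 := by field_simp
  have hv : 1 / (2 * (K + 2)) * (2 * (K + 2)) = 1 := by field_simp
  set u := 1 / (2 * (K + 1)) with hu'
  set v := 1 / (2 * (K + 2)) with hv'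
  have hd1 : 0 < K - u := by nlinarith
  have hd2 : 0 < (K + 1) - v := by nlinarith
  set a := K - u with ha
  set b := (K + 1) - v with hb
  have h' : x * (K * a) ≤ (a + 1) * S := by
    have h3 := mul_le_mul_of_nonneg_right h (le_of_lt (mul_pos hK0 hd1))
    have he : 1 / K * (1 + 1 / a) * S * (K * a) = (a + 1) * S := by
      field_simp
    rw [he] at h3
    exact h3
  have hsmall : K * (u - v) + u ≤ 1 := by nlinarith [mul_pos hK0 hvpos]
  have hKb : K * b ≤ K * a + a + 1 := by
    have : K * b = K * a + K + K * (u - v) := by rw [ha, hb]; ring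
    rw [this, ha]; linarith
  have hcoef : (a + 1) * (K * b - 1) ≤ (b + 1) * (K * a) := by nlinarith [hKb]
  have key : x * (K * b - 1) ≤ (b + 1) * S := by
    rcases le_or_gt (K * b - 1) 0 with hneg | hpos
    · nlinarith [mul_nonneg (le_of_lt hd2) hS]
    · have H1 := mul_le_mul_of_nonneg_right h' (le_of_lt hpos)
      have H2 := mul_le_mul_of_nonneg_right hcoef hS
      have H : x * (K * b - 1) * (K * a) ≤ (b + 1) * S * (K * a) := by nlinarith [H1, H2]
      exact le_of_mul_le_mul_right H (mul_pos hK0 hd1)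
  have hr : 1 / (K + 1) * (1 + 1 / b) * (S + x) = (b + 1) * (S + x) / ((K + 1) * b) := by
    field_simp
  rw [hr, le_div_iff₀ (mul_pos h1 hd2)]
  have hyb := mul_le_mul_of_nonneg_right hyx (by positivity : (0:ℝ) ≤ (K + 1) * b)
  have e : x * ((K + 1) * b) = x * (K * b - 1) + x * (b + 1) := by ring
  nlinarith [key, hyb, e]

lemma mono_aux (c : ℕ → ℝ) : ∀ k : ℕ, (∀ i, 1 ≤ i → i ≤ k → c i ≤ c (i + 1)) →
    ∀ i, 1 ≤ i → i ≤ k → c i ≤ c k := by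
  intro k
  induction k with
  | zero => intro _ i h1 h2; omega
  | succ n ih =>
    intro hmono i h1 h2
    rcases Nat.lt_or_ge i (n + 1) with hlt | hge
    · have hn1 : 1 ≤ n := by omega
      have := ih (fun j hj1 hj2 => hmono j hj1 (by omega)) i h1 (by omega)
      exact this.trans (hmono n hn1 (by omega))
    · have : i = n + 1 := by omega
      rw [this]

/-- Induction step (Lemma: once the greedy stopping condition holds at `k`, it holds at
`k+1`), with firms indexed `1, …, k+1`. -/
theorem stmt10 (k : ℕ) (hk : 1 ≤ k) (α : ℝ) (c : ℕ → ℝ)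
    (hmono : ∀ i, 1 ≤ i → i ≤ k → c i ≤ c (i + 1))
    (hnn : c k ≤ α)
    (hstop : α - c k ≤ (1 / (k : ℝ)) * (1 + 1 / ((k : ℝ) - 1 / (2 * ((k : ℝ) + 1)))) *
      ∑ i ∈ Finset.Icc 1 (k - 1), (α - c i)) :
    α - c (k + 1) ≤ (1 / ((k : ℝ) + 1)) *
      (1 + 1 / (((k : ℝ) + 1) - 1 / (2 * ((k : ℝ) + 2)))) *
      ∑ i ∈ Finset.Icc 1 k, (α - c i) := by
  have hle : ∀ i, 1 ≤ i → i ≤ k → c i ≤ c k := mono_aux c k hmono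
  have hS : 0 ≤ ∑ i ∈ Finset.Icc 1 (k - 1), (α - c i) := by
    apply Finset.sum_nonneg
    intro i hi
    rw [Finset.mem_Icc] at hi
    have := hle i hi.1 (by omega)
    linarith
  have hsplit : ∑ i ∈ Finset.Icc 1 k, (α - c i)
      = (∑ i ∈ Finset.Icc 1 (k - 1), (α - c i)) + (α - c k) := by
    obtain ⟨m, rfl⟩ : ∃ m, k = m + 1 := ⟨k - 1, by omega⟩
    rw [Finset.sum_Icc_succ_top (by omega : 1 ≤ m + 1)]
    simp
  rw [hsplit]
  have hK : (1 : ℝ) ≤ (k : ℝ) := by exact_mod_cast hk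
  have hyx : α - c (k + 1) ≤ α - c k := by
    have := hmono k hk le_rfl
    linarith
  exact aux10 (k : ℝ) _ _ _ hK hS (by linarith) hyx hstop
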